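/- Let B be an m×n real matrix, let f : ℝ → ℝ be strictly increasing, let A be the matrix with A_{ij} = f(B_{ij}), and let θ ∈ ℝ. Then there exists an m×n real matrix C with rank(C) ≤ rank(B) + 1 such that C_{ij} ≠ 0 for all i, j and C_{ij} > 0 ⇔ A_{ij} > θ. Consequently, for any matrix A of underlying rank r and any threshold θ, the sign matrix S(A,θ) defined by S(A,θ)_{ij} = sign(A_{ij} − θ) (with the convention sign(0) = −1) has sign rank at most r + 1. -/

import Mathlib

lemma myRankAddLe {m n : ℕ} (X Y : Matrix (Fin m) (Fin n) ℝ) :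
    (X + Y).rank ≤ X.rank + Y.rank := by
  classical
  simp only [Matrix.rank]
  rw [Matrix.mulVecLin_add]
  have hle : LinearMap.range (X.mulVecLin + Y.mulVecLin) ≤
      LinearMap.range X.mulVecLin ⊔ LinearMap.range Y.mulVecLin := by
    rintro x ⟨v, rfl⟩
    exact Submodule.mem_sup.2 ⟨X.mulVecLin v, ⟨v, rfl⟩, Y.mulVecLin v, ⟨v, rfl⟩, rfl⟩
  exact (Submodule.finrank_mono hle).trans
    (Submodule.finrank_add_le_finrank_add_finrank _ _)

lemma myRankConstLe {m n : ℕ} (c : ℝ) :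
    (Matrix.of (fun (_ : Fin m) (_ : Fin n) => c)).rank ≤ 1 := by
  have h : Matrix.of (fun (_ : Fin m) (_ : Fin n) => c) =
      (Matrix.of fun (_ : Fin m) (_ : Fin 1) => c) *
        (Matrix.of fun (_ : Fin 1) (_ : Fin n) => (1 : ℝ)) := by
    ext i j
    simp [Matrix.mul_apply]
  rw [h]
  exact (Matrix.rank_mul_le_left _ _).trans
    (Matrix.rank_le_width (Matrix.of fun (_ : Fin m) (_ : Fin 1) => c))

lemma existsThreshold {m n : ℕ} (B A : Matrix (Fin m) (Fin n) ℝ) (θ : ℝ)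
    (h : ∀ i j k l, ¬ θ < A i j → θ < A k l → B i j < B k l) :
    ∃ t : ℝ, ∀ i j, B i j ≠ t ∧ (t < B i j ↔ θ < A i j) := by
  classical
  set L : Finset ℝ := (Finset.univ.filter
    (fun p : Fin m × Fin n => ¬ θ < A p.1 p.2)).image (fun p => B p.1 p.2) with hL
  set H : Finset ℝ := (Finset.univ.filter
    (fun p : Fin m × Fin n => θ < A p.1 p.2)).image (fun p => B p.1 p.2) with hH
  have memL : ∀ i j, ¬ θ < A i j → B i j ∈ L := fun i j hij =>
    Finset.mem_image.2 ⟨(i, j), Finset.mem_filter.2 ⟨Finset.mem_univ _, hij⟩, rfl⟩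
  have memH : ∀ i j, θ < A i j → B i j ∈ H := fun i j hij =>
    Finset.mem_image.2 ⟨(i, j), Finset.mem_filter.2 ⟨Finset.mem_univ _, hij⟩, rfl⟩
  have hLH : ∀ x ∈ L, ∀ y ∈ H, x < y := by
    intro x hx y hy
    obtain ⟨⟨i, j⟩, hp, rfl⟩ := Finset.mem_image.1 hx
    obtain ⟨⟨k, l⟩, hq, rfl⟩ := Finset.mem_image.1 hy
    exact h i j k l (Finset.mem_filter.1 hp).2 (Finset.mem_filter.1 hq).2
  by_cases hLn : L.Nonempty
  · by_cases hHn : H.Nonempty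
    · refine ⟨(L.max' hLn + H.min' hHn) / 2, fun i j => ?_⟩
      have hlt : L.max' hLn < H.min' hHn :=
        hLH _ (L.max'_mem hLn) _ (H.min'_mem hHn)
      have h1 : L.max' hLn < (L.max' hLn + H.min' hHn) / 2 := by linarith
      have h2 : (L.max' hLn + H.min' hHn) / 2 < H.min' hHn := by linarith
      by_cases hij : θ < A i j
      · have := H.min'_le _ (memH i j hij)
        constructor
        · intro heq; linarith
        · constructor <;> intro _ <;> [exact hij; linarith]
      · have := L.le_max' _ (memL i j hij)
        constructor
        · intro heq; linarith
        · constructor <;> intro hc <;> [linarith; exact absurd hc hij]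
    · refine ⟨L.max' hLn + 1, fun i j => ?_⟩
      have hij : ¬ θ < A i j := fun hc => hHn ⟨_, memH i j hc⟩
      have := L.le_max' _ (memL i j hij)
      refine ⟨fun heq => by linarith, ?_, ?_⟩
      · intro hc; linarith
      · intro hc; exact absurd hc hij
  · by_cases hHn : H.Nonempty
    · refine ⟨H.min' hHn - 1, fun i j => ?_⟩
      have hij : θ < A i j := by
        by_contra hc; exact hLn ⟨_, memL i j hc⟩
      have := H.min'_le _ (memH i j hij)
      refine ⟨fun heq => by linarith, fun _ => hij, fun _ => by linarith⟩
    · refine ⟨0, fun i j => ?_⟩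
      by_cases hij : θ < A i j
      · exact absurd ⟨_, memH i j hij⟩ hHn
      · exact absurd ⟨_, memL i j hij⟩ hLn

lemma mainStep {m n : ℕ} (B A : Matrix (Fin m) (Fin n) ℝ) (θ : ℝ)
    (h : ∀ i j k l, ¬ θ < A i j → θ < A k l → B i j < B k l) :
    ∃ C : Matrix (Fin m) (Fin n) ℝ, C.rank ≤ B.rank + 1 ∧
      ∀ i j, C i j ≠ 0 ∧ (0 < C i j ↔ θ < A i j) := by
  obtain ⟨t, ht⟩ := existsThreshold B A θ h
  refine ⟨B + Matrix.of (fun _ _ => -t), ?_, fun i j => ?_⟩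
  · exact (myRankAddLe B _).trans (add_le_add_right (myRankConstLe (-t)) _)
  · obtain ⟨h1, h2⟩ := ht i j
    constructor
    · simp only [Matrix.add_apply, Matrix.of_apply]
      intro hc
      exact h1 (by linarith)
    · simp only [Matrix.add_apply, Matrix.of_apply, ← h2]
      constructor <;> intro <;> linarith

/-- If `A = f ∘ B` entrywise with `f` strictly increasing, then for any threshold `θ`
there is a matrix `C` of rank at most `rank B + 1` with no zero entries whose sign
pattern is that of `S(A, θ)` (positive exactly where `A_{ij} > θ`). Consequently, a
matrix of underlying rank at most `r` has `sign rank(S(A, θ)) ≤ r + 1` for every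
threshold `θ`. -/
theorem stmt17 {m n : ℕ} (B : Matrix (Fin m) (Fin n) ℝ) (f : ℝ → ℝ) (hf : StrictMono f)
    (A : Matrix (Fin m) (Fin n) ℝ) (hA : ∀ i j, A i j = f (B i j)) (θ : ℝ) :
    (∃ C : Matrix (Fin m) (Fin n) ℝ, C.rank ≤ B.rank + 1 ∧
      ∀ i j, C i j ≠ 0 ∧ (0 < C i j ↔ θ < A i j)) ∧
    (∀ (A' : Matrix (Fin m) (Fin n) ℝ) (θ' : ℝ) (r : ℕ),
      (∃ B' : Matrix (Fin m) (Fin n) ℝ, B'.rank ≤ r ∧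
        ∀ i j k l, A' i j < A' k l ↔ B' i j < B' k l) →
      ∃ C : Matrix (Fin m) (Fin n) ℝ, C.rank ≤ r + 1 ∧
        ∀ i j, C i j ≠ 0 ∧ (0 < C i j ↔ θ' < A' i j)) := by
  constructor
  · refine mainStep B A θ (fun i j k l hij hkl => ?_)
    by_contra hc
    push_neg at hc
    have := hf.monotone hc
    rw [← hA, ← hA] at this
    exact hij (lt_of_lt_of_le hkl this)
  · rintro A' θ' r ⟨B', hB'r, hB'⟩
    obtain ⟨C, hC1, hC2⟩ := mainStep B' A' θ' (fun i j k l hij hkl => by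
      rw [← hB']
      push_neg at hij
      exact lt_of_le_of_lt hij hkl)
    exact ⟨C, hC1.trans (add_le_add_left hB'r 1), hC2⟩
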